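/- arXiv:1006.2730 — 4 statements merged into one kernel-verified Lean document; each statement's English description precedes it below -/
import Mathlib

section
/- Let L > 0, let ρ : ℝ → ℝ be continuous with ρ(x) > 0 on [−L,L], and let ξ be continuous on [−L,L]. Define κ = (1/(2L)) ∫_{−L}^{L} ∫_{−L}^{y} √(ρ(z)) ξ(z) dz dy and ξ₁(x) = √(ρ(x)) ∫_{−L}^{x} [κ − ∫_{−L}^{y} √(ρ(z)) ξ(z) dz] dy. Then ξ₁(−L) = 0, ξ₁(L) = 0, and the function ψ₁ := ξ₁/√ρ is twice continuously differentiable on [−L,L] with ψ₁''(x) = −√(ρ(x)) ξ(x) for all x ∈ [−L,L]. -/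
open Real Set intervalIntegral

/-- The iteration map of the paper: it sends a continuous function `ξ` on `[-L, L]`
to `x ↦ √(ρ x) · ∫_{-L}^{x} (κ - ∫_{-L}^{y} √(ρ z) ξ z dz) dy`, where the constant
`κ = (1/(2L)) ∫_{-L}^{L} ∫_{-L}^{y} √(ρ z) ξ z dz dy`. -/
noncomputable def stringIter (L : ℝ) (ρ ξ : ℝ → ℝ) : ℝ → ℝ := fun x =>
  Real.sqrt (ρ x) *
    ∫ y in (-L)..x,
      ((1 / (2 * L)) * ∫ u in (-L)..L, ∫ z in (-L)..u, Real.sqrt (ρ z) * ξ z) -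
        ∫ z in (-L)..y, Real.sqrt (ρ z) * ξ z

/-- The result `ξ₁` of one application of the iteration map vanishes at both
endpoints of the string, and `ψ₁ = ξ₁/√ρ` is `C²` on `[-L, L]` with
`ψ₁'' = -√ρ · ξ`: the iteration map inverts the operator `(1/√ρ)(-d²/dx²)(1/√ρ)`. -/
theorem stringIter_dirichlet_and_inverts
    (L : ℝ) (hL : 0 < L) (ρ ξ : ℝ → ℝ)
    (hρ : Continuous ρ) (hρpos : ∀ x ∈ Set.Icc (-L) L, 0 < ρ x)
    (hξ : ContinuousOn ξ (Set.Icc (-L) L)) :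
    stringIter L ρ ξ (-L) = 0 ∧ stringIter L ρ ξ L = 0 ∧
    ContDiffOn ℝ 2 (fun x => stringIter L ρ ξ x / Real.sqrt (ρ x)) (Set.Icc (-L) L) ∧
    ∀ x ∈ Set.Icc (-L) L,
      iteratedDerivWithin 2 (fun x => stringIter L ρ ξ x / Real.sqrt (ρ x))
          (Set.Icc (-L) L) x
        = -(Real.sqrt (ρ x) * ξ x) := by
  have hlt : (-L) < L := by linarith
  have hle : (-L) ≤ L := hlt.le
  set s : Set ℝ := Set.Icc (-L) L with hs
  -- continuous extension of ξ
  set ξ' : ℝ → ℝ := Set.IccExtend hle (s.restrict ξ) with hξ'def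
  have hξ'cont : Continuous ξ' := Continuous.Icc_extend' (continuousOn_iff_continuous_restrict.1 hξ)
  have hξ'eq : ∀ x ∈ s, ξ' x = ξ x := by
    intro x hx
    simp [hξ'def, Set.IccExtend_of_mem hle _ hx]
    exact rfl
  -- the integrand and its primitive
  set f : ℝ → ℝ := fun z => Real.sqrt (ρ z) * ξ' z with hfdef
  have hfcont : Continuous f := (hρ.sqrt).mul hξ'cont
  set g : ℝ → ℝ := fun y => ∫ z in (-L)..y, f z with hgdef
  have hg' : ∀ x, HasDerivAt g (f x) x := fun x =>
    intervalIntegral.integral_hasDerivAt_right (hfcont.intervalIntegrable _ _)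
      hfcont.aestronglyMeasurable.stronglyMeasurableAtFilter hfcont.continuousAt
  have hgcont : Continuous g := by
    have : Differentiable ℝ g := fun x => (hg' x).differentiableAt
    exact this.continuous
  set κ : ℝ := (1 / (2 * L)) * ∫ u in (-L)..L, g u with hκdef
  set F : ℝ → ℝ := fun x => ∫ y in (-L)..x, (κ - g y) with hFdef
  have hFint : Continuous (fun y => κ - g y) := continuous_const.sub hgcont
  have hF' : ∀ x, HasDerivAt F (κ - g x) x := fun x =>
    intervalIntegral.integral_hasDerivAt_right (hFint.intervalIntegrable _ _)
      hFint.aestronglyMeasurable.stronglyMeasurableAtFilter hFint.continuousAt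
  -- identification of inner integrals
  have hg_eq : ∀ y ∈ s, (∫ z in (-L)..y, Real.sqrt (ρ z) * ξ z) = g y := by
    intro y hy
    refine (intervalIntegral.integral_congr fun z hz => ?_).symm
    rw [Set.uIcc_of_le hy.1] at hz
    have hzs : z ∈ s := ⟨hz.1, hz.2.trans hy.2⟩
    simp [hfdef, hξ'eq z hzs]
  have hκ_eq : ((1 / (2 * L)) * ∫ u in (-L)..L, ∫ z in (-L)..u, Real.sqrt (ρ z) * ξ z) = κ := by
    rw [hκdef]
    congr 1
    refine intervalIntegral.integral_congr fun u hu => ?_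
    rw [Set.uIcc_of_le hle] at hu
    exact hg_eq u hu
  -- identification of stringIter with √ρ · F on s
  have hstring_eq : ∀ x ∈ s, stringIter L ρ ξ x = Real.sqrt (ρ x) * F x := by
    intro x hx
    unfold stringIter
    congr 1
    refine intervalIntegral.integral_congr fun y hy => ?_
    rw [Set.uIcc_of_le hx.1] at hy
    have hys : y ∈ s := ⟨hy.1, hy.2.trans hx.2⟩
    rw [hκ_eq, hg_eq y hys]
  have hsqrt_ne : ∀ x ∈ s, Real.sqrt (ρ x) ≠ 0 := fun x hx =>
    (Real.sqrt_pos.2 (hρpos x hx)).ne'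
  have hEq : Set.EqOn (fun x => stringIter L ρ ξ x / Real.sqrt (ρ x)) F s := by
    intro x hx
    simp only [hstring_eq x hx]
    exact mul_div_cancel_left₀ _ (hsqrt_ne x hx)
  -- endpoint values
  have hmemL : (-L) ∈ s := by constructor <;> linarith
  have hmemR : L ∈ s := by constructor <;> linarith
  have hend1 : stringIter L ρ ξ (-L) = 0 := by
    unfold stringIter; simp
  have hFL : F L = 0 := by
    show (∫ y in (-L)..L, (κ - g y)) = 0
    rw [intervalIntegral.integral_sub (intervalIntegrable_const)
      (hgcont.intervalIntegrable _ _)]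
    rw [intervalIntegral.integral_const, hκdef]
    have h2L : L - (-L) = 2 * L := by ring
    rw [h2L]
    field_simp
    rw [smul_eq_mul, mul_div_assoc', mul_div_cancel_left₀ _ (ne_of_gt (by linarith : (0:ℝ) < 2 * L)), sub_self]
  have hend2 : stringIter L ρ ξ L = 0 := by
    rw [hstring_eq L hmemR, hFL, mul_zero]
  -- smoothness of F
  have hderivF : deriv F = fun x => κ - g x := funext fun x => (hF' x).deriv
  have hderivG : deriv (fun x => κ - g x) = fun x => -f x :=
    funext fun x => ((hg' x).const_sub κ).deriv
  have hF_C2 : ContDiff ℝ 2 F := by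
    rw [show (2 : WithTop ℕ∞) = 1 + 1 by norm_num]
    refine contDiff_succ_iff_deriv.2 ⟨fun x => (hF' x).differentiableAt, by simp, ?_⟩
    rw [hderivF]
    refine contDiff_one_iff_deriv.2
      ⟨fun x => ((hg' x).const_sub κ).differentiableAt, ?_⟩
    rw [hderivG]
    exact hfcont.neg
  have hC2 : ContDiffOn ℝ 2 (fun x => stringIter L ρ ξ x / Real.sqrt (ρ x)) s :=
    (hF_C2.contDiffOn).congr hEq
  refine ⟨hend1, hend2, hC2, ?_⟩
  -- second derivative within s
  have hUD : UniqueDiffOn ℝ s := uniqueDiffOn_Icc hlt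
  intro x hx
  have step1 : iteratedDerivWithin 2 (fun x => stringIter L ρ ξ x / Real.sqrt (ρ x)) s x
      = iteratedDerivWithin 2 F s x := iteratedDerivWithin_congr hEq hx
  have hdW1 : Set.EqOn (derivWithin F s) (fun y => κ - g y) s := fun y hy =>
    ((hF' y).hasDerivWithinAt).derivWithin (hUD y hy)
  have hone : Set.EqOn (iteratedDerivWithin 1 F s) (fun y => κ - g y) s := by
    intro y hy
    rw [iteratedDerivWithin_one]
    exact hdW1 hy
  have step2 : iteratedDerivWithin 2 F s x = derivWithin (iteratedDerivWithin 1 F s) s x :=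
    congrFun (iteratedDerivWithin_succ (n := 1)) x
  have step3 : derivWithin (iteratedDerivWithin 1 F s) s x
      = derivWithin (fun y => κ - g y) s x := derivWithin_congr hone (hone hx)
  have step4 : derivWithin (fun y => κ - g y) s x = -f x :=
    (((hg' x).const_sub κ).hasDerivWithinAt).derivWithin (hUD x hx)
  rw [step1, step2, step3, step4, hfdef]
  simp [hξ'eq x hx]
end

section
/- Let N be a positive even integer, L > 0, and for k ∈ {−N/2+1, …, N/2−1} define the little sinc functions s_k(N,L,x) = (2L/N) Σ_{n=1}^{N} ψ_n(x) ψ_n(x_k), where ψ_n(x) = L^{−1/2} sin(nπ(x+L)/(2L)) and x_k = 2Lk/N. Then for all k, j ∈ {−N/2+1, …, N/2−1}, ∫_{−L}^{L} s_k(N,L,x) s_j(N,L,x) dx = (2L/N) δ_{kj}. -/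
open Real Finset intervalIntegral

lemma sum_pow_Icc (z : ℂ) (hz : z ≠ 1) (N : ℕ) :
    ∑ n ∈ Finset.Icc 1 N, z ^ n = z * (z ^ N - 1) / (z - 1) := by
  rw [← Finset.Ico_add_one_right_eq_Icc, Finset.sum_Ico_eq_sum_range]
  simp only [Nat.succ_sub_one, add_tsub_cancel_right, pow_add, pow_one]
  rw [← Finset.mul_sum, geom_sum_eq hz]
  ring

lemma cos_sum_re (θ : ℝ) (N : ℕ) (hz : Complex.exp (θ * Complex.I) ≠ 1) :
    ∑ n ∈ Finset.Icc 1 N, Real.cos (n * θ)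
      = (Complex.exp (θ * Complex.I) * (Complex.exp (θ * Complex.I) ^ N - 1)
          / (Complex.exp (θ * Complex.I) - 1)).re := by
  rw [← sum_pow_Icc _ hz, Complex.re_sum]
  refine Finset.sum_congr rfl fun n _ => ?_
  rw [← Complex.exp_nat_mul, ← Complex.exp_ofReal_mul_I_re]
  congr 2
  push_cast
  ring

lemma cos_sum_one (θ : ℝ) (N : ℕ) (hz : Complex.exp (θ * Complex.I) ≠ 1)
    (hN : Complex.exp (θ * Complex.I) ^ N = 1) :
    ∑ n ∈ Finset.Icc 1 N, Real.cos (n * θ) = 0 := by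
  rw [cos_sum_re θ N hz, hN]
  simp

lemma cos_sum_neg_one (θ : ℝ) (N : ℕ) (hz : Complex.exp (θ * Complex.I) ≠ 1)
    (hN : Complex.exp (θ * Complex.I) ^ N = -1) :
    ∑ n ∈ Finset.Icc 1 N, Real.cos (n * θ) = -1 := by
  rw [cos_sum_re θ N hz, hN]
  set z := Complex.exp (θ * Complex.I) with hzdef
  have hz0 : z ≠ 0 := Complex.exp_ne_zero _
  have hz1 : z - 1 ≠ 0 := sub_ne_zero.mpr hz
  have hconj : (starRingEnd ℂ) z = z⁻¹ := by
    rw [hzdef, ← Complex.exp_conj, ← Complex.exp_neg]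
    congr 1
    simp [Complex.conj_I]
  have hz1' : z⁻¹ - 1 ≠ 0 := by
    intro h
    apply hz
    have : z⁻¹ = 1 := by linear_combination h
    field_simp at this
    exact this.symm
  have h1z : (1:ℂ) - z ≠ 0 := sub_ne_zero.mpr (Ne.symm hz)
  have key : z * (-1 - 1) / (z - 1) + (starRingEnd ℂ) (z * (-1 - 1) / (z - 1)) = -2 := by
    simp only [map_div₀, map_mul, map_sub, map_one, map_neg, hconj]
    field_simp [h1z]
    ring
  have h := Complex.add_conj (z * (-1 - 1) / (z - 1))
  rw [key] at h
  have h2 : ((2:ℝ) * (z * (-1 - 1) / (z - 1)).re : ℝ) = (-2 : ℝ) := by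
    exact_mod_cast h.symm
  linarith

lemma exp_ne_one_of (θ : ℝ) (h0 : θ ≠ 0) (h1 : |θ| < 2 * π) :
    Complex.exp (θ * Complex.I) ≠ 1 := by
  intro h
  rw [Complex.exp_eq_one_iff] at h
  obtain ⟨n, hn⟩ := h
  have him : θ = n * (2 * π) := by
    have := congrArg Complex.im hn
    simpa using this
  rcases eq_or_ne n 0 with h | h
  · rw [h] at him; simp at him; exact h0 him
  · have h1' : (1 : ℝ) ≤ |(n : ℝ)| := by
      have h2 : (1 : ℤ) ≤ |n| := Int.one_le_abs h
      calc (1:ℝ) = ((1:ℤ):ℝ) := by norm_num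
        _ ≤ ((|n|:ℤ):ℝ) := by exact_mod_cast h2
        _ = |(n:ℝ)| := by push_cast; ring
    have hpi : 0 < π := Real.pi_pos
    rw [him, abs_mul, abs_of_pos (by positivity : (0:ℝ) < 2 * π)] at h1
    nlinarith

lemma exp_pow_int (m : ℤ) (N : ℕ) (hN : (N:ℝ) ≠ 0) :
    Complex.exp ((π * m / N : ℝ) * Complex.I) ^ N = (-1 : ℂ) ^ m := by
  rw [← Complex.exp_nat_mul, ← Complex.exp_pi_mul_I, ← Complex.exp_int_mul]
  congr 1
  have hNC : (N:ℂ) ≠ 0 := by exact_mod_cast hN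
  push_cast
  field_simp

lemma exp_ne' (N : ℕ) (hN : (0:ℝ) < N) (m : ℤ) (hm0 : m ≠ 0) (hm : |m| < 2 * N) :
    Complex.exp ((π * m / N : ℝ) * Complex.I) ≠ 1 := by
  apply exp_ne_one_of
  · have hmR : ((m:ℝ)) ≠ 0 := Int.cast_ne_zero.mpr hm0
    have := Real.pi_pos
    positivity
  · have hpi := Real.pi_pos
    rw [abs_div, abs_mul, abs_of_pos hpi, abs_of_pos hN]
    rw [div_lt_iff₀ hN]
    have hmR : |(m:ℝ)| < 2 * N := by
      have : ((|m|:ℤ):ℝ) < ((2 * N : ℤ):ℝ) := by exact_mod_cast hm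
      push_cast at this
      simpa using this
    nlinarith [abs_nonneg (m:ℝ)]

lemma cos_sum_int (N : ℕ) (hN : (0:ℝ) < N) (m : ℤ) (hm0 : m ≠ 0) (hm : |m| < 2 * N) :
    ∑ n ∈ Finset.Icc 1 N, Real.cos (n * (π * m / N)) = if Even m then 0 else -1 := by
  have hNne : (N:ℝ) ≠ 0 := ne_of_gt hN
  have hz := exp_ne' N hN m hm0 hm
  rcases Int.even_or_odd m with he | ho
  · rw [if_pos he]
    apply cos_sum_one _ _ hz
    rw [exp_pow_int m N hNne]
    exact he.neg_one_zpow
  · rw [if_neg (Int.not_even_iff_odd.mpr ho)]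
    apply cos_sum_neg_one _ _ hz
    rw [exp_pow_int m N hNne]
    exact ho.neg_one_zpow

lemma discrete_orth' (N : ℕ) (hN : 0 < N) (K J : ℤ)
    (hK1 : 0 < K) (hK2 : K < N) (hJ1 : 0 < J) (hJ2 : J < N) :
    ∑ n ∈ Finset.Icc 1 N, Real.sin (n * (π * K / N)) * Real.sin (n * (π * J / N))
      = if K = J then (N:ℝ) / 2 else 0 := by
  have hNR : (0:ℝ) < N := by exact_mod_cast hN
  have hNne : (N:ℝ) ≠ 0 := ne_of_gt hNR
  have hsum : ∀ n : ℕ, Real.sin (n * (π * K / N)) * Real.sin (n * (π * J / N))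
      = (Real.cos (n * (π * ((K - J : ℤ)) / N)) - Real.cos (n * (π * ((K + J : ℤ)) / N))) / 2 := by
    intro n
    rw [Real.cos_sub_cos]
    push_cast
    have e1 : ((n:ℝ) * (π * ((K:ℝ) - J) / N) + n * (π * ((K:ℝ) + J) / N)) / 2
        = n * (π * K / N) := by field_simp; ring
    have e2 : ((n:ℝ) * (π * ((K:ℝ) - J) / N) - n * (π * ((K:ℝ) + J) / N)) / 2
        = -(n * (π * J / N)) := by field_simp; ring
    rw [e1, e2, Real.sin_neg]
    ring
  simp only [hsum]
  rw [← Finset.sum_div, Finset.sum_sub_distrib]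
  have hsN : ∑ n ∈ Finset.Icc 1 N, Real.cos (n * (π * ((K + J : ℤ)) / N)) = if Even (K + J) then 0 else -1 := by
    apply cos_sum_int N hNR
    · omega
    · rw [abs_of_pos (by omega : (0:ℤ) < K + J)]; omega
  rcases eq_or_ne K J with h | h
  · subst h
    rw [if_pos rfl]
    have h1 : ∑ n ∈ Finset.Icc 1 N, Real.cos (n * (π * ((K - K : ℤ)) / N)) = N := by
      have : ∀ n ∈ Finset.Icc 1 N, Real.cos (n * (π * ((K - K : ℤ)) / N)) = 1 := by
        intro n _
        simp
      rw [Finset.sum_congr rfl this]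
      simp
    rw [h1, hsN, if_pos (by exact ⟨K, by ring⟩)]
    ring
  · rw [if_neg h]
    have hdm : ∑ n ∈ Finset.Icc 1 N, Real.cos (n * (π * ((K - J : ℤ)) / N)) = if Even (K - J) then 0 else -1 := by
      apply cos_sum_int N hNR
      · omega
      · rw [abs_lt]; constructor <;> omega
    rw [hdm, hsN]
    have hpar : Even (K - J) ↔ Even (K + J) := by
      rw [Int.even_sub, Int.even_add]
    by_cases hE : Even (K - J)
    · rw [if_pos hE, if_pos (hpar.mp hE)]; ring
    · rw [if_neg hE, if_neg (fun h => hE (hpar.mpr h))]; ring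

lemma cos_affine_integral (L : ℝ) (hL : 0 < L) (c : ℝ) (hc : c ≠ 0)
    (hsin : Real.sin (2 * L * c) = 0) :
    ∫ x in (-L)..L, Real.cos (c * x + c * L) = 0 := by
  rw [intervalIntegral.integral_comp_mul_add Real.cos hc (c * L)]
  rw [show c * -L + c * L = 0 by ring, show c * L + c * L = 2 * L * c by ring,
    integral_cos]
  simp [hsin]

lemma psi_orth (L : ℝ) (hL : 0 < L) (n m : ℕ) (hn : 1 ≤ n) (hm : 1 ≤ m) :
    (∫ x in (-L)..L, Real.sin ((n:ℝ) * π * (x + L) / (2 * L)) *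
        Real.sin ((m:ℝ) * π * (x + L) / (2 * L)))
      = if n = m then L else 0 := by
  have hL' : L ≠ 0 := ne_of_gt hL
  have hpi := Real.pi_pos
  have hprod : ∀ x : ℝ, Real.sin ((n:ℝ) * π * (x + L) / (2 * L)) *
        Real.sin ((m:ℝ) * π * (x + L) / (2 * L))
      = (Real.cos ((((n:ℝ) - m) * π / (2 * L)) * x + (((n:ℝ) - m) * π / (2 * L)) * L)
         - Real.cos ((((n:ℝ) + m) * π / (2 * L)) * x + (((n:ℝ) + m) * π / (2 * L)) * L)) / 2 := by
    intro x
    rw [Real.cos_sub_cos]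
    have e1 : (((((n:ℝ) - m) * π / (2 * L)) * x + (((n:ℝ) - m) * π / (2 * L)) * L)
        + ((((n:ℝ) + m) * π / (2 * L)) * x + (((n:ℝ) + m) * π / (2 * L)) * L)) / 2
        = (n:ℝ) * π * (x + L) / (2 * L) := by field_simp; ring
    have e2 : (((((n:ℝ) - m) * π / (2 * L)) * x + (((n:ℝ) - m) * π / (2 * L)) * L)
        - ((((n:ℝ) + m) * π / (2 * L)) * x + (((n:ℝ) + m) * π / (2 * L)) * L)) / 2
        = -((m:ℝ) * π * (x + L) / (2 * L)) := by field_simp; ring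
    rw [e1, e2, Real.sin_neg]
    ring
  simp only [hprod]
  have hint : ∀ c d : ℝ, IntervalIntegrable (fun x => Real.cos (c * x + d))
      MeasureTheory.volume (-L) L := by
    intro c d
    exact (Real.continuous_cos.comp (by continuity)).intervalIntegrable _ _
  rw [intervalIntegral.integral_div, intervalIntegral.integral_sub (hint _ _) (hint _ _)]
  rcases eq_or_ne n m with h | h
  · subst h
    rw [if_pos rfl]
    have h1 : (∫ x in (-L)..L, Real.cos ((((n:ℝ) - n) * π / (2 * L)) * x
        + (((n:ℝ) - n) * π / (2 * L)) * L)) = 2 * L := by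
      simp
      ring
    have h2 : (∫ x in (-L)..L, Real.cos ((((n:ℝ) + n) * π / (2 * L)) * x
        + (((n:ℝ) + n) * π / (2 * L)) * L)) = 0 := by
      apply cos_affine_integral L hL
      · have : (0:ℝ) < (n:ℝ) + n := by
          have : (1:ℝ) ≤ (n:ℝ) := by exact_mod_cast hn
          linarith
        positivity
      · rw [show 2 * L * (((n:ℝ) + n) * π / (2 * L)) = ((n + n : ℕ):ℝ) * π by
          push_cast; field_simp]
        exact Real.sin_nat_mul_pi (n + n)
    rw [h1, h2]
    ring
  · rw [if_neg h]
    have hnm : ((n:ℝ)) ≠ (m:ℝ) := by exact_mod_cast h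
    have h1 : (∫ x in (-L)..L, Real.cos ((((n:ℝ) - m) * π / (2 * L)) * x
        + (((n:ℝ) - m) * π / (2 * L)) * L)) = 0 := by
      apply cos_affine_integral L hL
      · have : (n:ℝ) - m ≠ 0 := sub_ne_zero.mpr hnm
        positivity
      · rw [show 2 * L * (((n:ℝ) - m) * π / (2 * L)) = (((n:ℤ) - m : ℤ):ℝ) * π by
          push_cast; field_simp]
        exact Real.sin_int_mul_pi _
    have h2 : (∫ x in (-L)..L, Real.cos ((((n:ℝ) + m) * π / (2 * L)) * x
        + (((n:ℝ) + m) * π / (2 * L)) * L)) = 0 := by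
      apply cos_affine_integral L hL
      · have : (0:ℝ) < (n:ℝ) + m := by
          have : (1:ℝ) ≤ (n:ℝ) := by exact_mod_cast hn
          have : (0:ℝ) ≤ (m:ℝ) := by positivity
          linarith
        positivity
      · rw [show 2 * L * (((n:ℝ) + m) * π / (2 * L)) = ((n + m : ℕ):ℝ) * π by
          push_cast; field_simp]
        exact Real.sin_nat_mul_pi (n + m)
    rw [h1, h2]
    ring

/-- Continuum orthogonality of the little sinc functions
`s_k(N,L,x) = (2L/N) Σ_{n=1}^{N} ψ_n(x) ψ_n(x_k)`, where
`ψ_n(x) = L^{-1/2} sin(nπ(x+L)/(2L))` and `x_k = 2Lk/N`: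
`∫_{-L}^{L} s_k s_j dx = (2L/N) δ_{kj}`. -/
theorem little_sinc_continuum_orthogonality
    (N : ℕ) (hN : 0 < N) (hNeven : Even N) (L : ℝ) (hL : 0 < L) (k j : ℤ)
    (hk₁ : -(N : ℤ) < 2 * k) (hk₂ : 2 * k < (N : ℤ))
    (hj₁ : -(N : ℤ) < 2 * j) (hj₂ : 2 * j < (N : ℤ)) :
    (∫ x in (-L)..L,
        ((2 * L / (N : ℝ)) * ∑ n ∈ Finset.Icc 1 N,
            ((Real.sqrt L)⁻¹ * Real.sin ((n : ℝ) * π * (x + L) / (2 * L))) *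
              ((Real.sqrt L)⁻¹ *
                Real.sin ((n : ℝ) * π * ((2 * L * (k : ℝ) / (N : ℝ)) + L) / (2 * L)))) *
          ((2 * L / (N : ℝ)) * ∑ n ∈ Finset.Icc 1 N,
            ((Real.sqrt L)⁻¹ * Real.sin ((n : ℝ) * π * (x + L) / (2 * L))) *
              ((Real.sqrt L)⁻¹ *
                Real.sin ((n : ℝ) * π * ((2 * L * (j : ℝ) / (N : ℝ)) + L) / (2 * L)))))
      = if k = j then 2 * L / (N : ℝ) else 0 := by
  obtain ⟨M, hM⟩ := hNeven
  have hL' : L ≠ 0 := ne_of_gt hL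
  have hNR : (0:ℝ) < N := by exact_mod_cast hN
  have hNne : (N:ℝ) ≠ 0 := ne_of_gt hNR
  have hNM : (N:ℝ) = (M:ℝ) + M := by rw [hM]; push_cast; ring
  set a : ℝ := (Real.sqrt L)⁻¹ with ha
  have ha2 : a ^ 2 = L⁻¹ := by
    rw [ha, ← Real.sqrt_inv, Real.sq_sqrt (by positivity)]
  set f : ℕ → ℝ → ℝ := fun n x => Real.sin ((n : ℝ) * π * (x + L) / (2 * L)) with hf
  set gk : ℕ → ℝ := fun n => Real.sin ((n : ℝ) * π * ((2 * L * (k : ℝ) / (N : ℝ)) + L) / (2 * L)) with hgk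
  set gj : ℕ → ℝ := fun n => Real.sin ((n : ℝ) * π * ((2 * L * (j : ℝ) / (N : ℝ)) + L) / (2 * L)) with hgj
  have hpt : ∀ x : ℝ,
      ((2 * L / (N : ℝ)) * ∑ n ∈ Finset.Icc 1 N, (a * f n x) * (a * gk n)) *
        ((2 * L / (N : ℝ)) * ∑ n ∈ Finset.Icc 1 N, (a * f n x) * (a * gj n))
      = ((2 * L / (N : ℝ))^2 * (L⁻¹)^2) *
          ∑ n ∈ Finset.Icc 1 N, ∑ m ∈ Finset.Icc 1 N,
            (gk n * gj m) * (f n x * f m x) := by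
    intro x
    have h1 : ∀ G : ℕ → ℝ, ∑ n ∈ Finset.Icc 1 N, (a * f n x) * (a * G n)
        = L⁻¹ * ∑ n ∈ Finset.Icc 1 N, f n x * G n := by
      intro G
      rw [Finset.mul_sum, ← ha2]
      exact Finset.sum_congr rfl fun n _ => by ring
    rw [h1 gk, h1 gj]
    have h2 : (∑ n ∈ Finset.Icc 1 N, f n x * gk n) * (∑ n ∈ Finset.Icc 1 N, f n x * gj n)
        = ∑ n ∈ Finset.Icc 1 N, ∑ m ∈ Finset.Icc 1 N, (gk n * gj m) * (f n x * f m x) := by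
      rw [Finset.sum_mul_sum]
      exact Finset.sum_congr rfl fun n _ => Finset.sum_congr rfl fun m _ => by ring
    rw [← h2]
    ring
  rw [intervalIntegral.integral_congr (fun x _ => hpt x)]
  rw [intervalIntegral.integral_const_mul]
  have hcont : ∀ n : ℕ, Continuous (f n) := by
    intro n
    apply Real.continuous_sin.comp
    continuity
  have hint : ∀ n m : ℕ, IntervalIntegrable (fun x => (gk n * gj m) * (f n x * f m x))
      MeasureTheory.volume (-L) L := by
    intro n m
    exact (continuous_const.mul ((hcont n).mul (hcont m))).intervalIntegrable _ _
  rw [intervalIntegral.integral_finset_sum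
    (f := fun n x => ∑ m ∈ Finset.Icc 1 N, (gk n * gj m) * (f n x * f m x)) (fun n _ =>
    (continuous_finset_sum _ fun m _ =>
      (continuous_const.mul ((hcont n).mul (hcont m)))).intervalIntegrable _ _)]
  have hinner : ∀ n ∈ Finset.Icc 1 N,
      (∫ x in (-L)..L, ∑ m ∈ Finset.Icc 1 N, (gk n * gj m) * (f n x * f m x))
        = L * (gk n * gj n) := by
    intro n hn
    rw [intervalIntegral.integral_finset_sum (fun m _ => hint n m)]
    have : ∀ m ∈ Finset.Icc 1 N,
        (∫ x in (-L)..L, (gk n * gj m) * (f n x * f m x))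
          = (gk n * gj m) * (if n = m then L else 0) := by
      intro m hm
      rw [intervalIntegral.integral_const_mul]
      congr 1
      exact psi_orth L hL n m (Finset.mem_Icc.mp hn).1 (Finset.mem_Icc.mp hm).1
    rw [Finset.sum_congr rfl this]
    simp only [mul_ite, mul_zero]
    rw [Finset.sum_ite_eq]
    rw [if_pos hn]
    ring
  rw [Finset.sum_congr rfl hinner]
  rw [← Finset.mul_sum]
  -- rewrite gk, gj arguments
  have hargk : ∀ n : ℕ, gk n = Real.sin ((n:ℝ) * (π * ((k + M : ℤ) : ℝ) / N)) := by
    intro n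
    show Real.sin ((n : ℝ) * π * ((2 * L * ((k:ℤ) : ℝ) / (N : ℝ)) + L) / (2 * L)) = _
    congr 1
    push_cast
    field_simp
    linear_combination (n:ℝ) * hNM
  have hargj : ∀ n : ℕ, gj n = Real.sin ((n:ℝ) * (π * ((j + M : ℤ) : ℝ) / N)) := by
    intro n
    show Real.sin ((n : ℝ) * π * ((2 * L * ((j:ℤ) : ℝ) / (N : ℝ)) + L) / (2 * L)) = _
    congr 1
    push_cast
    field_simp
    linear_combination (n:ℝ) * hNM
  have hsum : ∑ n ∈ Finset.Icc 1 N, gk n * gj n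
      = if (k + M : ℤ) = (j + M : ℤ) then (N:ℝ)/2 else 0 := by
    rw [Finset.sum_congr rfl (fun n _ => by rw [hargk n, hargj n])]
    apply discrete_orth' N hN <;> omega
  rw [hsum]
  simp only [add_left_inj]
  rcases eq_or_ne k j with h | h
  · rw [if_pos h, if_pos h]
    field_simp
  · rw [if_neg h, if_neg h]
    ring
end

section
/- For α > −1 define E₀^{(1)}(α) = (n₁(α) + n₂(α) log²(1+α)) / (d₁(α) + d₂(α) log(1+α) + d₃(α) log²(1+α)), where n₁(α) = 108α⁴, n₂(α) = 108α²(1+α), d₁(α) = 8α²(α² + 3α + 3), d₂(α) = −30α(α² + 3α + 2), d₃(α) = 36(1+α)². Then lim_{α → −1⁺} E₀^{(1)}(α) = 27/2 and lim_{α → ∞} E₀^{(1)}(α) = 27/2. -/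
open Real Filter Set
open scoped Topology

private lemma borg_xlogx : Tendsto (fun x : ℝ => x * Real.log x) (𝓝[>] 0) (𝓝 0) := by
  have h := tendsto_log_mul_rpow_nhdsGT_zero (r := 1) zero_lt_one
  refine h.congr' ?_
  filter_upwards [self_mem_nhdsWithin] with x (hx : (0:ℝ) < x)
  rw [Real.rpow_one, mul_comm]

private lemma borg_xlogx2 : Tendsto (fun x : ℝ => x * Real.log x ^ 2) (𝓝[>] 0) (𝓝 0) := by
  have h := (tendsto_log_mul_rpow_nhdsGT_zero (r := 1/2) (by norm_num)).pow 2
  norm_num at h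
  refine h.congr' ?_
  filter_upwards [self_mem_nhdsWithin] with x (hx : (0:ℝ) < x)
  rw [mul_pow, ← Real.rpow_natCast (x ^ ((1:ℝ)/2)) 2, ← Real.rpow_mul hx.le]
  norm_num
  ring

private lemma borg_map : Tendsto (fun α : ℝ => 1 + α) (𝓝[>] (-1 : ℝ)) (𝓝[>] (0 : ℝ)) := by
  rw [tendsto_nhdsWithin_iff]
  constructor
  · have : Tendsto (fun α : ℝ => 1 + α) (𝓝 (-1 : ℝ)) (𝓝 (1 + -1)) :=
      (continuous_const.add continuous_id).tendsto _
    norm_num at this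
    exact this.mono_left nhdsWithin_le_nhds
  · filter_upwards [self_mem_nhdsWithin] with α (hα : (-1:ℝ) < α)
    simp only [mem_Ioi]; linarith

/-- The Rayleigh quotient of the first iterate for the Borg string,
`E₀⁽¹⁾(α) = (n₁ + n₂ log²(1+α)) / (d₁ + d₂ log(1+α) + d₃ log²(1+α))` with
`n₁ = 108α⁴`, `n₂ = 108α²(1+α)`, `d₁ = 8α²(α²+3α+3)`, `d₂ = -30α(α²+3α+2)`,
`d₃ = 36(1+α)²`, tends to `27/2` both as `α → -1⁺` and as `α → ∞`. -/
theorem borg_rayleigh_quotient_limits :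
    Tendsto
      (fun α : ℝ =>
        (108 * α ^ 4 + 108 * α ^ 2 * (1 + α) * (Real.log (1 + α)) ^ 2) /
          (8 * α ^ 2 * (α ^ 2 + 3 * α + 3) -
            30 * α * (α ^ 2 + 3 * α + 2) * Real.log (1 + α) +
            36 * (1 + α) ^ 2 * (Real.log (1 + α)) ^ 2))
      (𝓝[>] (-1 : ℝ)) (𝓝 (27 / 2 : ℝ)) ∧
    Tendsto
      (fun α : ℝ =>
        (108 * α ^ 4 + 108 * α ^ 2 * (1 + α) * (Real.log (1 + α)) ^ 2) /
          (8 * α ^ 2 * (α ^ 2 + 3 * α + 3) -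
            30 * α * (α ^ 2 + 3 * α + 2) * Real.log (1 + α) +
            36 * (1 + α) ^ 2 * (Real.log (1 + α)) ^ 2))
      atTop (𝓝 (27 / 2 : ℝ)) := by
  have hpoly : ∀ p : ℝ → ℝ, Continuous p → Tendsto p (𝓝[>] (-1:ℝ)) (𝓝 (p (-1))) :=
    fun p hp => (hp.tendsto _).mono_left nhdsWithin_le_nhds
  constructor
  · -- α → -1⁺
    have h1 : Tendsto (fun α : ℝ => (1 + α) * Real.log (1 + α) ^ 2) (𝓝[>] (-1:ℝ)) (𝓝 0) :=
      borg_xlogx2.comp borg_map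
    have h4 : Tendsto (fun α : ℝ => (1 + α) * Real.log (1 + α)) (𝓝[>] (-1:ℝ)) (𝓝 0) :=
      borg_xlogx.comp borg_map
    have hn : Tendsto (fun α : ℝ =>
        108 * α ^ 4 + 108 * α ^ 2 * ((1 + α) * Real.log (1 + α) ^ 2))
        (𝓝[>] (-1:ℝ)) (𝓝 108) := by
      have h2 := hpoly (fun α => 108 * α ^ 4) (by fun_prop)
      have h3 := hpoly (fun α => 108 * α ^ 2) (by fun_prop)
      norm_num at h2 h3
      have := h2.add (h3.mul h1)
      norm_num at this
      exact this
    have hd : Tendsto (fun α : ℝ =>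
        8 * α ^ 2 * (α ^ 2 + 3 * α + 3) -
          30 * α * (α + 2) * ((1 + α) * Real.log (1 + α)) +
          36 * ((1 + α) * Real.log (1 + α)) ^ 2)
        (𝓝[>] (-1:ℝ)) (𝓝 8) := by
      have p1 := hpoly (fun α => 8 * α ^ 2 * (α ^ 2 + 3 * α + 3)) (by fun_prop)
      have p2 := hpoly (fun α => 30 * α * (α + 2)) (by fun_prop)
      norm_num at p1 p2
      have := (p1.sub (p2.mul h4)).add ((h4.pow 2).const_mul 36)
      norm_num at this
      exact this
    have := hn.div hd (by norm_num)
    norm_num at this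
    refine this.congr fun α => ?_
    simp only [Pi.div_apply]
    ring_nf
  · -- α → ∞
    have hmap : Tendsto (fun α : ℝ => 1 + α) atTop atTop :=
      tendsto_atTop_add_const_left _ 1 tendsto_id
    have hev : ∀ᶠ α : ℝ in atTop, 0 < α := eventually_gt_atTop 0
    have h5 : Tendsto (fun α : ℝ => Real.log (1 + α) / (1 + α)) atTop (𝓝 0) := by
      have h := Real.tendsto_pow_log_div_mul_add_atTop 1 0 1 one_ne_zero
      norm_num at h
      exact h.comp hmap
    have h6 : Tendsto (fun α : ℝ => Real.log (1 + α) ^ 2 / (1 + α)) atTop (𝓝 0) := by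
      have h := Real.tendsto_pow_log_div_mul_add_atTop 1 0 2 one_ne_zero
      norm_num at h
      exact h.comp hmap
    have hinv : Tendsto (fun α : ℝ => α⁻¹) atTop (𝓝 0) := tendsto_inv_atTop_zero
    have h7 : Tendsto (fun α : ℝ => (1 + α) / α) atTop (𝓝 1) := by
      have : Tendsto (fun α : ℝ => α⁻¹ + 1) atTop (𝓝 (0 + 1)) := hinv.add tendsto_const_nhds
      norm_num at this
      refine this.congr' ?_
      filter_upwards [hev] with α hα
      field_simp
    have hL : Tendsto (fun α : ℝ => Real.log (1 + α) / α) atTop (𝓝 0) := by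
      have := h5.mul h7
      norm_num at this
      refine this.congr' ?_
      filter_upwards [hev] with α hα
      have h1α : (0:ℝ) < 1 + α := by linarith
      rw [div_mul_div_comm, mul_comm (Real.log (1 + α)), mul_div_mul_left _ _ h1α.ne']
    have hq3 : Tendsto (fun α : ℝ => (α ^ 2 + 3 * α + 3) / α ^ 2) atTop (𝓝 1) := by
      have : Tendsto (fun α : ℝ => 1 + 3 * α⁻¹ + 3 * (α⁻¹ * α⁻¹)) atTop
          (𝓝 (1 + 3 * 0 + 3 * (0 * 0))) :=
        (tendsto_const_nhds.add (hinv.const_mul 3)).add ((hinv.mul hinv).const_mul 3)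
      norm_num at this
      refine this.congr' ?_
      filter_upwards [hev] with α hα
      field_simp
    have hq2 : Tendsto (fun α : ℝ => (α ^ 2 + 3 * α + 2) / α ^ 2) atTop (𝓝 1) := by
      have : Tendsto (fun α : ℝ => 1 + 3 * α⁻¹ + 2 * (α⁻¹ * α⁻¹)) atTop
          (𝓝 (1 + 3 * 0 + 2 * (0 * 0))) :=
        (tendsto_const_nhds.add (hinv.const_mul 3)).add ((hinv.mul hinv).const_mul 2)
      norm_num at this
      refine this.congr' ?_
      filter_upwards [hev] with α hα
      field_simp
    have hn : Tendsto (fun α : ℝ =>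
        (108 * α ^ 4 + 108 * α ^ 2 * (1 + α) * (Real.log (1 + α)) ^ 2) / α ^ 4)
        atTop (𝓝 108) := by
      have : Tendsto (fun α : ℝ =>
          108 + 108 * ((1 + α) / α) ^ 2 * (Real.log (1 + α) ^ 2 / (1 + α))) atTop
          (𝓝 (108 + 108 * 1 ^ 2 * 0)) :=
        tendsto_const_nhds.add (((h7.pow 2).const_mul 108).mul h6)
      norm_num at this
      refine this.congr' ?_
      filter_upwards [hev] with α hα
      have h1α : (0:ℝ) < 1 + α := by linarith
      field_simp
    have hd : Tendsto (fun α : ℝ =>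
        (8 * α ^ 2 * (α ^ 2 + 3 * α + 3) -
          30 * α * (α ^ 2 + 3 * α + 2) * Real.log (1 + α) +
          36 * (1 + α) ^ 2 * (Real.log (1 + α)) ^ 2) / α ^ 4)
        atTop (𝓝 8) := by
      have : Tendsto (fun α : ℝ =>
          8 * ((α ^ 2 + 3 * α + 3) / α ^ 2) -
            30 * ((α ^ 2 + 3 * α + 2) / α ^ 2) * (Real.log (1 + α) / α) +
            36 * ((1 + α) / α) ^ 2 * (Real.log (1 + α) / α) ^ 2) atTop
          (𝓝 (8 * 1 - 30 * 1 * 0 + 36 * 1 ^ 2 * 0 ^ 2)) :=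
        ((hq3.const_mul 8).sub ((hq2.const_mul 30).mul hL)).add
          (((h7.pow 2).const_mul 36).mul (hL.pow 2))
      norm_num at this
      refine this.congr' ?_
      filter_upwards [hev] with α hα
      field_simp
    have := hn.div hd (by norm_num)
    norm_num at this
    refine this.congr' ?_
    filter_upwards [hev] with α hα
    exact div_div_div_cancel_right₀ (by positivity : (α:ℝ) ^ 4 ≠ 0) _ _
end

section
/- Let α ∈ ℝ with |α| ≤ 2, let L' ∈ (−1/2, 1/2), and consider the parabolic density ρ(x) = (1 + αx)² on [−1/2, 1/2] and the initial function η₀(x) = (x + 1/2)(L' − x). Define κ̃ = (1/(1/2 + L')) ∫_{−1/2}^{L'} ∫_{−1/2}^{y} √(ρ(z)) η₀(z) dz dy and η₁(x) = √(ρ(x)) ∫_{−1/2}^{x} [κ̃ − ∫_{−1/2}^{y} √(ρ(z)) η₀(z) dz] dy. Then the shooting condition η₁(1/2) = 0 holds if and only if (α + 2)(2L' − 1)(α(4L'(L'+1)(4L'+1) − 5) + 10(4L'(L'+2) − 1)) = 0. -/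
open Real Set intervalIntegral

/-- Antiderivative of `(1+αy)(y+1/2)(L'-y)`. -/
noncomputable def pfunPS (α L' y : ℝ) : ℝ :=
  (-α/4)*y^4 + (α*L'/3 - α/6 - 1/3)*y^3 + (L'/2 + α*L'/4 - 1/4)*y^2 + (L'/2)*y

/-- Antiderivative of `pfunPS α L'`. -/
noncomputable def qfunPS (α L' y : ℝ) : ℝ :=
  (-α/20)*y^5 + ((α*L'/3 - α/6 - 1/3)/4)*y^4 + ((L'/2 + α*L'/4 - 1/4)/3)*y^3 + (L'/4)*y^2

lemma hasDerivAt_pfunPS (α L' t : ℝ) :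
    HasDerivAt (pfunPS α L') ((1 + α*t) * ((t + 1/2) * (L' - t))) t := by
  have h := ((((hasDerivAt_pow 4 t).const_mul (-α/4)).add
      ((hasDerivAt_pow 3 t).const_mul (α*L'/3 - α/6 - 1/3))).add
      ((hasDerivAt_pow 2 t).const_mul (L'/2 + α*L'/4 - 1/4))).add
      ((hasDerivAt_id t).const_mul (L'/2))
  have hfe : HasDerivAt (pfunPS α L')
      ((-α/4) * (↑4 * t ^ 3) + (α*L'/3 - α/6 - 1/3) * (↑3 * t ^ 2) +
        (L'/2 + α*L'/4 - 1/4) * (↑2 * t ^ 1) + (L'/2) * 1) t := by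
    unfold pfunPS
    exact h
  convert hfe using 1
  ring

lemma hasDerivAt_qfunPS (α L' t : ℝ) :
    HasDerivAt (qfunPS α L') (pfunPS α L' t) t := by
  have h := (((((hasDerivAt_pow 5 t).const_mul (-α/20)).add
      ((hasDerivAt_pow 4 t).const_mul ((α*L'/3 - α/6 - 1/3)/4))).add
      ((hasDerivAt_pow 3 t).const_mul ((L'/2 + α*L'/4 - 1/4)/3))).add
      ((hasDerivAt_pow 2 t).const_mul (L'/4)))
  have hfe : HasDerivAt (qfunPS α L')
      ((-α/20) * (↑5 * t ^ 4) + ((α*L'/3 - α/6 - 1/3)/4) * (↑4 * t ^ 3) +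
        ((L'/2 + α*L'/4 - 1/4)/3) * (↑3 * t ^ 2) + (L'/4) * (↑2 * t ^ 1)) t := by
    unfold qfunPS
    exact h
  convert hfe using 1
  unfold pfunPS
  ring

lemma continuous_pfunPS (α L' : ℝ) : Continuous (pfunPS α L') := by
  unfold pfunPS; continuity

lemma int_fPS (α L' a b : ℝ) :
    (∫ y in a..b, (1 + α*y) * ((y + 1/2) * (L' - y))) = pfunPS α L' b - pfunPS α L' a :=
  intervalIntegral.integral_eq_sub_of_hasDerivAt
    (fun t _ => hasDerivAt_pfunPS α L' t)
    ((by continuity : Continuous fun y : ℝ => (1 + α*y) * ((y + 1/2) * (L' - y))).intervalIntegrable a b)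

lemma int_pfunPS (α L' a b : ℝ) :
    (∫ y in a..b, pfunPS α L' y) = qfunPS α L' b - qfunPS α L' a :=
  intervalIntegral.integral_eq_sub_of_hasDerivAt
    (fun t _ => hasDerivAt_qfunPS α L' t)
    ((continuous_pfunPS α L').intervalIntegrable a b)

/-- Shooting condition for the parabolic string `ρ(x) = (1+αx)²` on `[-1/2, 1/2]`:
with `η₀(x) = (x+1/2)(L'-x)` and one step of the modified iteration,
`η₁(x) = √(ρ x) ∫_{-1/2}^{x} (κ̃ - ∫_{-1/2}^{y} √(ρ z) η₀ z dz) dy` where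
`κ̃ = (1/(1/2+L')) ∫_{-1/2}^{L'} ∫_{-1/2}^{y} √(ρ z) η₀ z dz dy`, the condition
`η₁(1/2) = 0` holds iff
`(α+2)(2L'-1)(α(4L'(L'+1)(4L'+1)-5) + 10(4L'(L'+2)-1)) = 0`. -/
theorem parabolic_string_shooting_condition
    (α : ℝ) (hα : |α| ≤ 2) (L' : ℝ) (hL' : L' ∈ Set.Ioo (-(1 : ℝ) / 2) (1 / 2)) :
    let ρ : ℝ → ℝ := fun x => (1 + α * x) ^ 2
    let η₀ : ℝ → ℝ := fun x => (x + 1 / 2) * (L' - x)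
    let κ : ℝ := (1 / (1 / 2 + L')) *
      ∫ y in (-(1 : ℝ) / 2)..L', ∫ z in (-(1 : ℝ) / 2)..y, Real.sqrt (ρ z) * η₀ z
    let η₁ : ℝ → ℝ := fun x => Real.sqrt (ρ x) *
      ∫ y in (-(1 : ℝ) / 2)..x, (κ - ∫ z in (-(1 : ℝ) / 2)..y, Real.sqrt (ρ z) * η₀ z)
    (η₁ (1 / 2) = 0 ↔
      (α + 2) * (2 * L' - 1) *
        (α * (4 * L' * (L' + 1) * (4 * L' + 1) - 5) + 10 * (4 * L' * (L' + 2) - 1))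
        = 0) := by
  intro ρ η₀ κ η₁
  obtain ⟨hαlo, hαhi⟩ := abs_le.mp hα
  obtain ⟨hL1, hL2⟩ := hL'
  have hne : (1 / 2 + L' : ℝ) ≠ 0 := ne_of_gt (by linarith)
  -- inner integral evaluation
  have hinner : ∀ b : ℝ, -(1 : ℝ) / 2 ≤ b → b ≤ 1 / 2 →
      (∫ z in (-(1 : ℝ) / 2)..b, Real.sqrt (ρ z) * η₀ z)
        = pfunPS α L' b - pfunPS α L' (-(1 : ℝ) / 2) := by
    intro b hb1 hb2
    rw [intervalIntegral.integral_congr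
        (g := fun z => (1 + α*z) * ((z + 1/2) * (L' - z))) ?_]
    · exact int_fPS α L' _ b
    · intro z hz
      rw [Set.uIcc_of_le hb1] at hz
      have hz1 : -(1 : ℝ) / 2 ≤ z := hz.1
      have hz2 : z ≤ 1 / 2 := hz.2.trans hb2
      have hnn : (0 : ℝ) ≤ 1 + α * z := by nlinarith
      simp only [ρ, η₀]
      rw [Real.sqrt_sq hnn]
  -- the double integral in κ
  have hκ : κ = (1 / (1 / 2 + L')) *
      ((qfunPS α L' L' - qfunPS α L' (-(1 : ℝ) / 2))
        - (L' - -(1 : ℝ) / 2) * pfunPS α L' (-(1 : ℝ) / 2)) := by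
    simp only [κ]
    congr 1
    rw [intervalIntegral.integral_congr
        (g := fun y => pfunPS α L' y - pfunPS α L' (-(1 : ℝ) / 2)) ?_]
    · rw [intervalIntegral.integral_sub
          ((continuous_pfunPS α L').intervalIntegrable _ _)
          intervalIntegrable_const,
        int_pfunPS, intervalIntegral.integral_const, smul_eq_mul]
    · intro y hy
      rw [Set.uIcc_of_le (by linarith : -(1 : ℝ) / 2 ≤ L')] at hy
      exact hinner y hy.1 (hy.2.trans hL2.le)
  have hκ2 : κ = L'^3/12 + L'^2/8 + L'/16 + 1/96
      + α*(L'^4/30 + L'^3/40 - L'^2/80 - 7*L'/480 - 1/320) := by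
    rw [hκ, one_div_mul_eq_div, div_eq_iff hne]
    simp only [pfunPS, qfunPS]
    ring
  -- evaluate η₁(1/2)
  have hfinal : η₁ (1 / 2) =
      ((α + 2) * (2 * L' - 1) *
        (α * (4 * L' * (L' + 1) * (4 * L' + 1) - 5) + 10 * (4 * L' * (L' + 2) - 1))) / 1920 := by
    simp only [η₁, ρ]
    rw [Real.sqrt_sq (by linarith : (0 : ℝ) ≤ 1 + α * (1 / 2))]
    rw [intervalIntegral.integral_congr
        (g := fun y => κ - (pfunPS α L' y - pfunPS α L' (-(1 : ℝ) / 2))) ?_]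
    · rw [intervalIntegral.integral_sub (f := fun _ => κ)
          (g := fun y => pfunPS α L' y - pfunPS α L' (-(1 : ℝ) / 2)) intervalIntegrable_const
          (((continuous_pfunPS α L').sub continuous_const).intervalIntegrable _ _),
        intervalIntegral.integral_const, smul_eq_mul,
        intervalIntegral.integral_sub
          ((continuous_pfunPS α L').intervalIntegrable _ _)
          intervalIntegrable_const,
        int_pfunPS, intervalIntegral.integral_const, smul_eq_mul, hκ2]
      simp only [pfunPS, qfunPS]
      ring
    · intro y hy
      rw [Set.uIcc_of_le (by norm_num : -(1 : ℝ) / 2 ≤ (1 : ℝ) / 2)] at hy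
      have := hinner y hy.1 hy.2
      simp only [ρ] at this
      simp only [this]
  rw [hfinal, div_eq_zero_iff]
  norm_num
end
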